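/- For any symmetric positive semidefinite n×n matrix W, θ ∈ ℝ, s > 0, and any function γ : ℝ → ℝ, setting Γ = γ applied to W via the spectral calculus, the quantity 1 − 2θ·n⁻¹tr(ΓW) + θ²·n⁻¹tr(WΓ²W) + s·n⁻¹tr(Γ²W) is at least n⁻¹ Σᵢ s/(s + θ²λᵢ), where λᵢ are the eigenvalues of W. -/
import Mathlib


open Matrix

lemma conj_diag_mul {n : ℕ} (U : Matrix (Fin n) (Fin n) ℝ) (hU : star U * U = 1)
    (a b : Fin n → ℝ) :
    (U * diagonal a * star U) * (U * diagonal b * star U)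
      = U * diagonal (fun i => a i * b i) * star U := by
  rw [← diagonal_mul_diagonal]
  calc U * diagonal a * star U * (U * diagonal b * star U)
      = U * diagonal a * (star U * U) * diagonal b * star U := by
        simp only [Matrix.mul_assoc]
    _ = U * (diagonal a * diagonal b) * star U := by
        rw [hU]; simp only [Matrix.mul_one, Matrix.mul_assoc]

lemma trace_conj_diag {n : ℕ} (U : Matrix (Fin n) (Fin n) ℝ) (hU : star U * U = 1)
    (a : Fin n → ℝ) : (U * diagonal a * star U).trace = ∑ i, a i := by
  rw [Matrix.trace_mul_cycle, hU, Matrix.one_mul, Matrix.trace_diagonal]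

lemma pointwise_ineq (θ s : ℝ) (hs : 0 < s) (l g : ℝ) (hl : 0 ≤ l) :
    s / (s + θ ^ 2 * l) ≤ 1 - 2 * θ * (g * l) + θ ^ 2 * (l * g ^ 2 * l) + s * (g ^ 2 * l) := by
  have hd : 0 < s + θ ^ 2 * l := by positivity
  rw [div_le_iff₀ hd]
  nlinarith [mul_nonneg hl (sq_nonneg (θ - g * (s + θ ^ 2 * l))), sq_nonneg (θ - g * (s + θ ^ 2 * l))]

/-- For a symmetric PSD matrix `W` with spectral decomposition, `θ ∈ ℝ`, `s > 0` and any
spectral function `Γ = γ(W)`, the risk expression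
`1 − 2θ n⁻¹tr(ΓW) + θ² n⁻¹tr(WΓ²W) + s n⁻¹tr(Γ²W)` is at least
`n⁻¹ Σᵢ s/(s + θ²λᵢ)`. -/
theorem risk_ge_optimal_on_spectrum (n : ℕ) (hn : 0 < n)
    (W : Matrix (Fin n) (Fin n) ℝ) (hW : W.PosSemidef)
    (θ s : ℝ) (hs : 0 < s) (γ : ℝ → ℝ)
    (Γ : Matrix (Fin n) (Fin n) ℝ)
    (hΓ : Γ = (hW.1.eigenvectorUnitary : Matrix (Fin n) (Fin n) ℝ) *
        diagonal (fun i => γ (hW.1.eigenvalues i)) *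
        star (hW.1.eigenvectorUnitary : Matrix (Fin n) (Fin n) ℝ)) :
    (n : ℝ)⁻¹ * ∑ i, s / (s + θ ^ 2 * hW.1.eigenvalues i) ≤
      1 - 2 * θ * ((n : ℝ)⁻¹ * (Γ * W).trace)
        + θ ^ 2 * ((n : ℝ)⁻¹ * (W * Γ ^ 2 * W).trace)
        + s * ((n : ℝ)⁻¹ * (Γ ^ 2 * W).trace) := by
  set U : Matrix (Fin n) (Fin n) ℝ := (hW.1.eigenvectorUnitary : Matrix (Fin n) (Fin n) ℝ)
  have hU : star U * U = 1 := (Matrix.mem_unitaryGroup_iff').mp (hW.1.eigenvectorUnitary).2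
  set l : Fin n → ℝ := hW.1.eigenvalues
  set g : Fin n → ℝ := fun i => γ (l i)
  have hWspec : W = U * diagonal l * star U := by
    have := hW.1.spectral_theorem
    simpa using this
  have hΓ2 : Γ ^ 2 = U * diagonal (fun i => g i * g i) * star U := by
    rw [sq, hΓ, conj_diag_mul U hU]
  have h1 : (Γ * W).trace = ∑ i, g i * l i := by
    rw [hΓ, hWspec, conj_diag_mul U hU, trace_conj_diag U hU]
  have h2 : (W * Γ ^ 2 * W).trace = ∑ i, l i * (g i * g i) * l i := by
    rw [hΓ2, hWspec, conj_diag_mul U hU, conj_diag_mul U hU, trace_conj_diag U hU]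
  have h3 : (Γ ^ 2 * W).trace = ∑ i, (g i * g i) * l i := by
    rw [hΓ2, hWspec, conj_diag_mul U hU, trace_conj_diag U hU]
  rw [h1, h2, h3]
  have hn' : (0:ℝ) < (n:ℝ) := by exact_mod_cast hn
  have key : ∑ i, s / (s + θ ^ 2 * l i)
      ≤ ∑ i : Fin n, (1 - 2 * θ * (g i * l i) + θ ^ 2 * (l i * g i ^ 2 * l i)
          + s * (g i ^ 2 * l i)) := by
    apply Finset.sum_le_sum
    intro i _
    exact pointwise_ineq θ s hs (l i) (g i) (hW.eigenvalues_nonneg i)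
  have hmul := mul_le_mul_of_nonneg_left key (by positivity : (0:ℝ) ≤ (n:ℝ)⁻¹)
  calc (n : ℝ)⁻¹ * ∑ i, s / (s + θ ^ 2 * l i)
      ≤ (n : ℝ)⁻¹ * ∑ i : Fin n, (1 - 2 * θ * (g i * l i)
          + θ ^ 2 * (l i * g i ^ 2 * l i) + s * (g i ^ 2 * l i)) := hmul
    _ = 1 - 2 * θ * ((n : ℝ)⁻¹ * ∑ i, g i * l i)
        + θ ^ 2 * ((n : ℝ)⁻¹ * ∑ i, l i * (g i * g i) * l i)
        + s * ((n : ℝ)⁻¹ * ∑ i, (g i * g i) * l i) := by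
        simp only [Finset.sum_add_distrib, Finset.sum_sub_distrib, ← Finset.mul_sum,
          Finset.sum_const, Finset.card_univ, Fintype.card_fin, nsmul_eq_mul, mul_one, sq]
        field_simp
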